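/- Let c, D > 0 and let G be a finite Borel measure on [0,∞) with G([0, c/(2D)]) = 0. Then for every t ≥ 0 and every L ∈ ℕ, Σ_{l=L}^∞ (2l+1)·C_l(t,t) ≤ (1 + c²t/(2D))²·exp(−c²t/D)·Σ_{l=L}^∞ (2l+1)·C_l. (Equivalently, ‖T_H(·,t) − T_{H,L}(·,t)‖_{L²(Ω×S²)} ≤ (1/(2√π))·(1 + c²t/(2D))·exp(−c²t/(2D))·(Σ_{l=L}^∞(2l+1)C_l)^{1/2}.) -/

import Mathlib

open MeasureTheory Real Set

/-- `H̃₁(μ,t)` for the subcritical regime `0 ≤ μ < c/(2D)`. -/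
noncomputable def Htilde1 (c D μ t : ℝ) : ℝ :=
  Real.exp (-(c ^ 2 * t) / (2 * D)) *
    (Real.cosh (c * t * Real.sqrt (c ^ 2 / (4 * D ^ 2) - μ ^ 2)) +
      c / (2 * D * Real.sqrt (c ^ 2 / (4 * D ^ 2) - μ ^ 2)) *
        Real.sinh (c * t * Real.sqrt (c ^ 2 / (4 * D ^ 2) - μ ^ 2)))

/-- `H̃₂(μ,t)` for the supercritical regime `μ > c/(2D)`. -/
noncomputable def Htilde2 (c D μ t : ℝ) : ℝ :=
  Real.exp (-(c ^ 2 * t) / (2 * D)) *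
    (Real.cos (c * t * Real.sqrt (μ ^ 2 - c ^ 2 / (4 * D ^ 2))) +
      c / (2 * D * Real.sqrt (μ ^ 2 - c ^ 2 / (4 * D ^ 2))) *
        Real.sin (c * t * Real.sqrt (μ ^ 2 - c ^ 2 / (4 * D ^ 2))))

/-- `H̃(μ,t)`, pieced together from `H̃₁`, the value at `μ = c/(2D)`, and `H̃₂`. -/
noncomputable def Htilde (c D μ t : ℝ) : ℝ :=
  if μ < c / (2 * D) then Htilde1 c D μ t
  else if μ = c / (2 * D) then Real.exp (-(c ^ 2 * t) / (2 * D)) * (1 + c ^ 2 * t / (2 * D))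
  else Htilde2 c D μ t

/-- Bessel function of the first kind of real order `ν`, via its power series
(with real powers; for `ν > 0` this gives `besselJ ν 0 = 0`). -/
noncomputable def besselJ (ν x : ℝ) : ℝ :=
  ∑' n : ℕ, ((-1 : ℝ) ^ n / (n.factorial * Real.Gamma ((n : ℝ) + ν + 1))) *
    (x / 2) ^ (2 * (n : ℝ) + ν)

/-- The integrand `J_{l+1/2}(μ)² / μ`, with its value at `μ = 0` defined by
continuous extension (`2/π` for `l = 0`, `0` for `l ≥ 1`). -/
noncomputable def besselInt (l : ℕ) (μ : ℝ) : ℝ :=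
  if μ = 0 then (if l = 0 then 2 / Real.pi else 0)
  else besselJ ((l : ℝ) + 1 / 2) μ ^ 2 / μ

/-- Angular power spectrum `C_l(t,t')` of the spherical hyperbolic diffusion field. -/
noncomputable def Cl (c D : ℝ) (G : MeasureTheory.Measure ℝ) (l : ℕ) (t t' : ℝ) : ℝ :=
  2 * Real.pi ^ 2 * ∫ μ in Set.Ici (0 : ℝ), besselInt l μ * Htilde c D μ t * Htilde c D μ t' ∂G


/-! ### Auxiliary development: Bessel function bounds and Htilde estimates -/

noncomputable def bterm (ν : ℝ) (n : ℕ) (x : ℝ) : ℝ :=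
  ((-1 : ℝ) ^ n / (n.factorial * Real.Gamma ((n : ℝ) + ν + 1))) * (x / 2) ^ (2 * (n : ℝ) + ν)

lemma besselJ_eq_tsum_bterm (ν x : ℝ) : besselJ ν x = ∑' n, bterm ν n x := rfl

lemma bgpos {ν : ℝ} (hν : -1 < ν) (n : ℕ) : 0 < Real.Gamma ((n : ℝ) + ν + 1) :=
  Real.Gamma_pos_of_pos (by have : (0:ℝ) ≤ n := Nat.cast_nonneg n; linarith)

lemma bterm_abs {ν x : ℝ} (hν : -1 < ν) (n : ℕ) :
    |bterm ν n x| = |(x / 2) ^ (2 * (n : ℝ) + ν)| / (n.factorial * Real.Gamma ((n : ℝ) + ν + 1)) := by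
  have h1 : (0:ℝ) < n.factorial * Real.Gamma ((n : ℝ) + ν + 1) := by
    have := bgpos hν n; positivity
  rw [bterm, abs_mul, abs_div, abs_pow, abs_neg, abs_one, one_pow, abs_of_pos h1]
  ring

lemma bterm_norm_succ {ν x : ℝ} (hν : -1 < ν) (hx : x ≠ 0) (n : ℕ) :
    ‖bterm ν (n+1) x‖ = ‖bterm ν n x‖ * ((x/2)^2 / (((n:ℝ)+1) * ((n:ℝ)+ν+1))) := by
  have hx2 : x/2 ≠ 0 := by simpa using hx
  have hg : ((n:ℝ) + ν + 1) ≠ 0 := ne_of_gt (by have : (0:ℝ) ≤ n := Nat.cast_nonneg n; linarith)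
  have hgam : Real.Gamma (((n:ℝ) + 1) + ν + 1) = ((n:ℝ) + ν + 1) * Real.Gamma ((n:ℝ) + ν + 1) := by
    rw [show (n:ℝ) + 1 + ν + 1 = ((n:ℝ) + ν + 1) + 1 by ring, Real.Gamma_add_one hg]
  have hexp : (x/2) ^ (2 * (((n:ℝ))+1) + ν) = (x/2) ^ (2*(n:ℝ) + ν) * (x/2)^(2:ℕ) := by
    rw [show 2 * ((n:ℝ)+1) + ν = (2*(n:ℝ) + ν) + ((2:ℕ):ℝ) by push_cast; ring,
      Real.rpow_add_natCast hx2]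
  have hgam0 := bgpos hν n
  have hfac : ((n+1).factorial : ℝ) = ((n:ℝ)+1) * n.factorial := by
    rw [Nat.factorial_succ]; push_cast; ring
  rw [Real.norm_eq_abs, Real.norm_eq_abs, bterm_abs hν, bterm_abs hν]
  push_cast
  rw [hgam, hexp, abs_mul, hfac]
  have h2 : |(x/2)^(2:ℕ)| = (x/2)^2 := by rw [abs_pow, sq_abs]
  rw [h2]
  have hfn : (0:ℝ) < n.factorial := by positivity
  field_simp

lemma bterm_summable {ν : ℝ} (hν : -1 < ν) (x : ℝ) : Summable (fun n => bterm ν n x) := by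
  rcases eq_or_ne x 0 with rfl | hx
  · apply summable_of_ne_finset_zero (s := {0})
    intro n hn
    have hn0 : n ≠ 0 := by simpa using hn
    have : (0:ℝ)/2 = 0 := by norm_num
    have h1 : (1:ℝ) ≤ n := by exact_mod_cast Nat.one_le_iff_ne_zero.2 hn0
    rw [bterm, this, Real.zero_rpow (by linarith : 2*(n:ℝ)+ν ≠ 0), mul_zero]
  · apply summable_of_ratio_norm_eventually_le (r := 1/2) (by norm_num)
    have hN : ∀ n : ℕ, (x^2 : ℝ) ≤ n → ‖bterm ν (n+1) x‖ ≤ 1/2 * ‖bterm ν n x‖ := by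
      intro n hn
      rw [bterm_norm_succ hν hx n]
      have h1 : (0:ℝ) ≤ ‖bterm ν n x‖ := norm_nonneg _
      have h2 : (x/2)^2 / (((n:ℝ)+1) * ((n:ℝ)+ν+1)) ≤ 1/2 := by
        rw [div_le_iff₀ (by nlinarith [Nat.cast_nonneg (α := ℝ) n])]
        nlinarith [Nat.cast_nonneg (α := ℝ) n, sq_nonneg x]
      calc ‖bterm ν n x‖ * ((x/2)^2 / (((n:ℝ)+1) * ((n:ℝ)+ν+1)))
          ≤ ‖bterm ν n x‖ * (1/2) := by apply mul_le_mul_of_nonneg_left h2 h1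
        _ = 1/2 * ‖bterm ν n x‖ := by ring
    filter_upwards [Filter.eventually_ge_atTop ⌈(x^2 : ℝ)⌉₊] with n hn
    exact hN n (le_trans (Nat.le_ceil _) (by exact_mod_cast hn))

lemma measurable_bterm (ν : ℝ) (n : ℕ) : Measurable (fun x => bterm ν n x) := by
  apply Measurable.const_mul
  have : Measurable fun y : ℝ => y ^ (2 * (n : ℝ) + ν) := by measurability
  exact this.comp (measurable_id.div_const 2)

lemma measurable_besselJ {ν : ℝ} (hν : -1 < ν) : Measurable (besselJ ν) := by
  have h : ∀ x, Filter.Tendsto (fun k => ∑ n ∈ Finset.range k, bterm ν n x) Filter.atTop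
      (nhds (besselJ ν x)) := fun x => ((bterm_summable hν x).hasSum.tendsto_sum_nat)
  exact measurable_of_tendsto_metrizable' Filter.atTop
    (fun k => Finset.measurable_sum _ (fun n _ => measurable_bterm ν n))
    (tendsto_pi_nhds.2 h)

lemma bterm_rec_zero {ν x : ℝ} (hν : 0 < ν) (hx : x ≠ 0) :
    bterm (ν-1) 0 x = (2*ν/x) * bterm ν 0 x := by
  have hx2 : x/2 ≠ 0 := by simpa using hx
  have hΓ : Real.Gamma (ν+1) = ν * Real.Gamma ν := Real.Gamma_add_one (ne_of_gt hν)
  have hΓ0 : Real.Gamma ν ≠ 0 := ne_of_gt (Real.Gamma_pos_of_pos hν)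
  simp only [bterm, Nat.cast_zero, Nat.factorial_zero, Nat.cast_one, pow_zero]
  rw [show 2*(0:ℝ) + (ν-1) = ν - 1 by ring, show (0:ℝ) + (ν-1) + 1 = ν by ring,
    show 2*(0:ℝ) + ν = (ν-1) + 1 by ring, show (0:ℝ) + ν + 1 = ν + 1 by ring,
    Real.rpow_add_one hx2, hΓ]
  field_simp

lemma bterm_rec_succ {ν x : ℝ} (hν : 0 < ν) (hx : x ≠ 0) (m : ℕ) :
    bterm (ν-1) (m+1) x + bterm (ν+1) m x = (2*ν/x) * bterm ν (m+1) x := by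
  have hx2 : x/2 ≠ 0 := by simpa using hx
  have hm0 : (0:ℝ) ≤ m := Nat.cast_nonneg m
  have hpos : (0:ℝ) < (m:ℝ) + ν + 1 := by linarith
  have hΓ : Real.Gamma ((m:ℝ) + ν + 2) = ((m:ℝ)+ν+1) * Real.Gamma ((m:ℝ)+ν+1) := by
    rw [show (m:ℝ) + ν + 2 = ((m:ℝ)+ν+1) + 1 by ring, Real.Gamma_add_one (ne_of_gt hpos)]
  have hΓ0 : Real.Gamma ((m:ℝ)+ν+1) ≠ 0 := ne_of_gt (Real.Gamma_pos_of_pos hpos)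
  have hfac : (((m+1).factorial : ℕ) : ℝ) = ((m:ℝ)+1) * (m.factorial : ℝ) := by
    rw [Nat.factorial_succ]; push_cast; ring
  simp only [bterm, Nat.cast_add, Nat.cast_one]
  rw [show 2*((m:ℝ)+1) + (ν-1) = 2*(m:ℝ)+(ν+1) by ring,
    show (m:ℝ)+1 + (ν-1) + 1 = (m:ℝ)+ν+1 by ring,
    show (m:ℝ) + (ν+1) + 1 = (m:ℝ)+ν+2 by ring,
    show 2*((m:ℝ)+1) + ν = (2*(m:ℝ)+(ν+1)) + 1 by ring,
    show (m:ℝ)+1 + ν + 1 = (m:ℝ)+ν+2 by ring,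
    Real.rpow_add_one hx2, hΓ, hfac, pow_succ]
  have hfm : ((m.factorial : ℕ) : ℝ) ≠ 0 := by positivity
  field_simp
  ring

lemma besselJ_recurrence {ν x : ℝ} (hν : 0 < ν) (hx : x ≠ 0) :
    besselJ (ν-1) x + besselJ (ν+1) x = (2*ν/x) * besselJ ν x := by
  have hs1 : Summable (fun n => bterm (ν-1) n x) := bterm_summable (by linarith) x
  have hs2 : Summable (fun n => bterm ν n x) := bterm_summable (by linarith) x
  have hs3 : Summable (fun n => bterm (ν+1) n x) := bterm_summable (by linarith) x
  set g : ℕ → ℝ := fun n => match n with | 0 => 0 | (m+1) => bterm (ν+1) m x with hgdef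
  have hg : Summable g := by
    rw [← summable_nat_add_iff 1]
    exact hs3
  have hgs : ∑' n, g n = besselJ (ν+1) x := by
    rw [Summable.tsum_eq_zero_add hg, besselJ_eq_tsum_bterm]
    simp [hgdef]
  rw [besselJ_eq_tsum_bterm (ν-1), ← hgs, besselJ_eq_tsum_bterm ν, ← Summable.tsum_add hs1 hg,
    ← tsum_mul_left]
  apply tsum_congr
  intro n
  match n with
  | 0 => show bterm (ν-1) 0 x + 0 = _ ; rw [add_zero]; exact bterm_rec_zero hν hx
  | (m+1) => exact bterm_rec_succ hν hx m

lemma Gamma_nat_add_half' (n : ℕ) :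
    Real.Gamma ((n:ℝ) + 1/2) = (2*n).factorial * Real.sqrt π / (4^n * n.factorial) := by
  induction n with
  | zero => norm_num [Real.Gamma_one_half_eq]
  | succ n ih =>
    have h : ((n:ℝ)+1) + 1/2 = ((n:ℝ) + 1/2) + 1 := by ring
    have hne : (n:ℝ) + 1/2 ≠ 0 := by positivity
    rw [Nat.cast_succ, h, Real.Gamma_add_one hne, ih]
    have e1 : (2*(n+1)).factorial = (2*n+2) * ((2*n+1) * (2*n).factorial) := by
      rw [show 2*(n+1) = (2*n+1)+1 by ring, Nat.factorial_succ, Nat.factorial_succ]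
    rw [e1, Nat.factorial_succ]
    push_cast
    have h4 : (4:ℝ)^n ≠ 0 := by positivity
    have hf : ((n.factorial : ℕ):ℝ) ≠ 0 := by positivity
    field_simp
    ring

lemma sqrtpi_pos : (0:ℝ) < Real.sqrt π := Real.sqrt_pos.2 Real.pi_pos

lemma bterm_neg_half {x : ℝ} (hx : 0 < x) (n : ℕ) :
    bterm (-(1/2)) n x = (1 / (Real.sqrt π * Real.sqrt (x/2))) *
      ((-1)^n * x^(2*n) / (2*n).factorial) := by
  have hx2 : (0:ℝ) < x/2 := by linarith
  have hΓarg : (n:ℝ) + (-(1/2)) + 1 = (n:ℝ) + 1/2 := by ring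
  have hexp : 2*(n:ℝ) + (-(1/2)) = ((2*n:ℕ):ℝ) + (-(1/2)) := by push_cast; ring
  rw [bterm, hΓarg, hexp, Real.rpow_add hx2, Real.rpow_natCast,
    Real.rpow_neg (le_of_lt hx2), ← Real.sqrt_eq_rpow, Gamma_nat_add_half' n]
  have h4 : (4:ℝ)^n = 2^(2*n) := by rw [show (4:ℝ) = 2^2 by norm_num, ← pow_mul]
  have hd : (x/2)^(2*n) = x^(2*n)/2^(2*n) := div_pow x 2 (2*n)
  rw [h4, hd]
  have hs : Real.sqrt (x/2) ≠ 0 := ne_of_gt (Real.sqrt_pos.2 hx2)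
  have h2 : (2:ℝ)^(2*n) ≠ 0 := by positivity
  have hf : ((n.factorial : ℕ):ℝ) ≠ 0 := by positivity
  have hf2 : (((2*n).factorial : ℕ):ℝ) ≠ 0 := by positivity
  have hsp : Real.sqrt π ≠ 0 := ne_of_gt sqrtpi_pos
  field_simp

lemma besselJ_neg_half {x : ℝ} (hx : 0 < x) :
    besselJ (-(1/2)) x = (1 / (Real.sqrt π * Real.sqrt (x/2))) * Real.cos x := by
  rw [besselJ_eq_tsum_bterm, Real.cos_eq_tsum, ← tsum_mul_left]
  exact tsum_congr fun n => by rw [bterm_neg_half hx n]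

lemma bterm_half {x : ℝ} (hx : 0 < x) (n : ℕ) :
    bterm (1/2) n x = (Real.sqrt (x/2) * (2 / Real.sqrt π) / x) *
      ((-1)^n * x^(2*n+1) / (2*n+1).factorial) := by
  have hx2 : (0:ℝ) < x/2 := by linarith
  have hΓarg : (n:ℝ) + (1/2) + 1 = ((n+1:ℕ):ℝ) + 1/2 := by push_cast; ring
  have hexp : 2*(n:ℝ) + (1/2) = ((2*n:ℕ):ℝ) + (1/2) := by push_cast; ring
  rw [bterm, hΓarg, hexp, Real.rpow_add hx2, Real.rpow_natCast,
    ← Real.sqrt_eq_rpow, Gamma_nat_add_half' (n+1)]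
  have h4 : (4:ℝ)^(n+1) = 2^(2*n)*4 := by
    rw [pow_succ, show (4:ℝ) = 2^2 by norm_num, ← pow_mul]
  have hd : (x/2)^(2*n) = x^(2*n)/2^(2*n) := div_pow x 2 (2*n)
  have hfe : (2*(n+1)).factorial = (2*n+2) * (2*n+1).factorial := by
    rw [show 2*(n+1) = (2*n+1)+1 by ring, Nat.factorial_succ]
  have hfe2 : (n+1).factorial = (n+1) * n.factorial := Nat.factorial_succ n
  rw [h4, hd, hfe, hfe2]
  have hs : Real.sqrt (x/2) ≠ 0 := ne_of_gt (Real.sqrt_pos.2 hx2)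
  have h2 : (2:ℝ)^(2*n) ≠ 0 := by positivity
  have hf : ((n.factorial : ℕ):ℝ) ≠ 0 := by positivity
  have hf2 : (((2*n+1).factorial : ℕ):ℝ) ≠ 0 := by positivity
  have hsp : Real.sqrt π ≠ 0 := ne_of_gt sqrtpi_pos
  have hxne : x ≠ 0 := ne_of_gt hx
  have hxp : x^(2*n+1) = x^(2*n)*x := pow_succ x (2*n)
  rw [hxp]
  push_cast
  field_simp
  ring

lemma besselJ_half {x : ℝ} (hx : 0 < x) :
    besselJ (1/2) x = (Real.sqrt (x/2) * (2 / Real.sqrt π) / x) * Real.sin x := by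
  rw [besselJ_eq_tsum_bterm, Real.sin_eq_tsum, ← tsum_mul_left]
  exact tsum_congr fun n => by rw [bterm_half hx n]

lemma besselJ_bounded_aux {a : ℝ} (ha : 0 < a) (k : ℕ) :
    ∃ C : ℝ, 0 ≤ C ∧ ∀ x, a ≤ x → |besselJ ((k:ℝ) - 1/2) x| ≤ C := by
  induction k using Nat.strong_induction_on with
  | _ k ih =>
    match k with
    | 0 =>
      refine ⟨1 / (Real.sqrt π * Real.sqrt (a/2)), by positivity, fun x hx => ?_⟩
      have hx0 : 0 < x := lt_of_lt_of_le ha hx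
      rw [show ((0:ℕ):ℝ) - 1/2 = -(1/2) by norm_num, besselJ_neg_half hx0]
      rw [abs_mul]
      have hsx2 : (0:ℝ) < Real.sqrt (x/2) := Real.sqrt_pos.2 (by linarith)
      have h1 : |1 / (Real.sqrt π * Real.sqrt (x/2))| = 1 / (Real.sqrt π * Real.sqrt (x/2)) := by
        rw [abs_of_pos (by positivity)]
      rw [h1]
      have h2 : |Real.cos x| ≤ 1 := Real.abs_cos_le_one x
      have h3 : Real.sqrt (a/2) ≤ Real.sqrt (x/2) := Real.sqrt_le_sqrt (by linarith)
      have h4 : (0:ℝ) < Real.sqrt (a/2) := Real.sqrt_pos.2 (by linarith)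
      have h5 : 1 / (Real.sqrt π * Real.sqrt (x/2)) ≤ 1 / (Real.sqrt π * Real.sqrt (a/2)) := by
        apply one_div_le_one_div_of_le (by positivity)
        exact mul_le_mul_of_nonneg_left h3 (le_of_lt sqrtpi_pos)
      calc 1 / (Real.sqrt π * Real.sqrt (x/2)) * |Real.cos x|
          ≤ 1 / (Real.sqrt π * Real.sqrt (x/2)) * 1 := by
            apply mul_le_mul_of_nonneg_left h2 (by positivity)
        _ ≤ 1 / (Real.sqrt π * Real.sqrt (a/2)) := by rw [mul_one]; exact h5
    | 1 =>
      refine ⟨2 / (Real.sqrt π * Real.sqrt a), by positivity, fun x hx => ?_⟩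
      have hx0 : 0 < x := lt_of_lt_of_le ha hx
      rw [show ((1:ℕ):ℝ) - 1/2 = 1/2 by norm_num, besselJ_half hx0]
      have hsx : (0:ℝ) < Real.sqrt x := Real.sqrt_pos.2 hx0
      have hsa : (0:ℝ) < Real.sqrt a := Real.sqrt_pos.2 ha
      have hsq : Real.sqrt x ^ 2 = x := Real.sq_sqrt (le_of_lt hx0)
      have key : Real.sqrt (x/2) / x ≤ 1 / Real.sqrt a := by
        have h1 : Real.sqrt (x/2) ≤ Real.sqrt x := Real.sqrt_le_sqrt (by linarith)
        have h2 : Real.sqrt a ≤ Real.sqrt x := Real.sqrt_le_sqrt hx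
        rw [div_le_div_iff₀ hx0 hsa]
        nlinarith
      rw [abs_mul]
      have h2 : |Real.sin x| ≤ 1 := Real.abs_sin_le_one x
      have hsx2 : (0:ℝ) < Real.sqrt (x/2) := Real.sqrt_pos.2 (by linarith)
      have hc : |Real.sqrt (x/2) * (2 / Real.sqrt π) / x|
          = Real.sqrt (x/2) * (2 / Real.sqrt π) / x := by
        rw [abs_of_nonneg (by positivity)]
      rw [hc]
      calc Real.sqrt (x/2) * (2 / Real.sqrt π) / x * |Real.sin x|
          ≤ Real.sqrt (x/2) * (2 / Real.sqrt π) / x * 1 :=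
            mul_le_mul_of_nonneg_left h2 (by positivity)
        _ = (2 / Real.sqrt π) * (Real.sqrt (x/2) / x) := by ring
        _ ≤ (2 / Real.sqrt π) * (1 / Real.sqrt a) := by
            apply mul_le_mul_of_nonneg_left key (by positivity)
        _ = 2 / (Real.sqrt π * Real.sqrt a) := by ring
    | (m+2) =>
      obtain ⟨C0, hC0, h0⟩ := ih m (by omega)
      obtain ⟨C1, hC1, h1⟩ := ih (m+1) (by omega)
      set ν : ℝ := (m:ℝ) + 1/2 with hν
      have hν0 : 0 < ν := by positivity
      refine ⟨2*ν/a * C1 + C0, by positivity, fun x hx => ?_⟩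
      have hx0 : 0 < x := lt_of_lt_of_le ha hx
      have hrec := besselJ_recurrence hν0 (ne_of_gt hx0)
      have e1 : ν - 1 = (m:ℝ) - 1/2 := by rw [hν]; ring
      have e2 : ν + 1 = ((m+2:ℕ):ℝ) - 1/2 := by rw [hν]; push_cast; ring
      have e3 : ν = ((m+1:ℕ):ℝ) - 1/2 := by rw [hν]; push_cast; ring
      have hJ2 : besselJ (((m+2:ℕ):ℝ) - 1/2) x
          = (2*ν/x) * besselJ ν x - besselJ ((m:ℝ) - 1/2) x := by
        rw [← e2, ← e1]; linarith [hrec]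
      rw [hJ2]
      have hb1 : |besselJ ν x| ≤ C1 := by rw [e3]; exact h1 x hx
      have hb0 : |besselJ ((m:ℝ) - 1/2) x| ≤ C0 := h0 x hx
      have hfrac : 2*ν/x ≤ 2*ν/a := by
        apply div_le_div_of_nonneg_left (by positivity) ha hx
      calc |2*ν/x * besselJ ν x - besselJ ((m:ℝ)-1/2) x|
          ≤ |2*ν/x * besselJ ν x| + |besselJ ((m:ℝ)-1/2) x| := abs_sub _ _
        _ ≤ 2*ν/a * C1 + C0 := by
            apply add_le_add _ hb0
            rw [abs_mul, abs_of_pos (by positivity : (0:ℝ) < 2*ν/x)]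
            apply mul_le_mul hfrac hb1 (abs_nonneg _) (by positivity)

lemma besselJ_bounded {a : ℝ} (ha : 0 < a) (l : ℕ) :
    ∃ C : ℝ, 0 ≤ C ∧ ∀ x, a ≤ x → |besselJ ((l:ℝ) + 1/2) x| ≤ C := by
  obtain ⟨C, hC0, hC⟩ := besselJ_bounded_aux ha (l+1)
  refine ⟨C, hC0, fun x hx => ?_⟩
  have : ((l+1:ℕ):ℝ) - 1/2 = (l:ℝ) + 1/2 := by push_cast; ring
  rw [← this]
  exact hC x hx

lemma Htilde2_zero (c D μ : ℝ) : Htilde2 c D μ 0 = 1 := by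
  simp [Htilde2]

lemma abs_Htilde2_le {c D μ t : ℝ} (hc : 0 < c) (hD : 0 < D) (ht : 0 ≤ t)
    (hμ : c / (2*D) < μ) :
    |Htilde2 c D μ t| ≤ (1 + c^2*t/(2*D)) * Real.exp (-(c^2*t)/(2*D)) := by
  have hcd : 0 < c/(2*D) := by positivity
  have hdiff : 0 < μ^2 - c^2/(4*D^2) := by
    have h1 : (c/(2*D))^2 = c^2/(4*D^2) := by field_simp; ring
    nlinarith
  set s := Real.sqrt (μ^2 - c^2/(4*D^2)) with hsdef
  have hs : 0 < s := Real.sqrt_pos.2 hdiff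
  have hθ : 0 ≤ c*t*s := by positivity
  have hsin : |Real.sin (c*t*s)| ≤ c*t*s := by
    calc |Real.sin (c*t*s)| ≤ |c*t*s| := Real.abs_sin_le_abs
      _ = c*t*s := abs_of_nonneg hθ
  have hinner : |Real.cos (c*t*s) + c/(2*D*s) * Real.sin (c*t*s)| ≤ 1 + c^2*t/(2*D) := by
    have h1 : |Real.cos (c*t*s) + c/(2*D*s) * Real.sin (c*t*s)|
        ≤ |Real.cos (c*t*s)| + |c/(2*D*s) * Real.sin (c*t*s)| := abs_add_le _ _
    have h2 : |c/(2*D*s) * Real.sin (c*t*s)| = c/(2*D*s) * |Real.sin (c*t*s)| := by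
      rw [abs_mul, abs_of_pos (by positivity : (0:ℝ) < c/(2*D*s))]
    have h3 : c/(2*D*s) * |Real.sin (c*t*s)| ≤ c/(2*D*s) * (c*t*s) :=
      mul_le_mul_of_nonneg_left hsin (by positivity)
    have h4 : c/(2*D*s) * (c*t*s) = c^2*t/(2*D) := by
      field_simp
    have h5 := Real.abs_cos_le_one (c*t*s)
    calc |Real.cos (c*t*s) + c/(2*D*s) * Real.sin (c*t*s)|
        ≤ |Real.cos (c*t*s)| + |c/(2*D*s) * Real.sin (c*t*s)| := h1
      _ ≤ 1 + c^2*t/(2*D) := by rw [h2]; rw [← h4] at *; linarith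
  rw [Htilde2, abs_mul, Real.abs_exp]
  calc Real.exp (-(c^2*t)/(2*D)) * |Real.cos (c*t*s) + c/(2*D*s) * Real.sin (c*t*s)|
      ≤ Real.exp (-(c^2*t)/(2*D)) * (1 + c^2*t/(2*D)) :=
        mul_le_mul_of_nonneg_left hinner (le_of_lt (Real.exp_pos _))
    _ = (1 + c^2*t/(2*D)) * Real.exp (-(c^2*t)/(2*D)) := by ring

lemma measurable_besselInt (l : ℕ) : Measurable (besselInt l) := by
  unfold besselInt
  apply Measurable.ite (measurableSet_eq)
  · exact measurable_const
  · have hν : (-1:ℝ) < (l:ℝ) + 1/2 := by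
      have : (0:ℝ) ≤ l := Nat.cast_nonneg l
      linarith
    exact ((measurable_besselJ hν).pow_const 2).div measurable_id

lemma measurable_Htilde2 (c D t : ℝ) : Measurable (fun μ => Htilde2 c D μ t) := by
  unfold Htilde2
  apply Measurable.const_mul
  apply Measurable.add
  · exact Real.measurable_cos.comp
      (measurable_const.mul ((measurable_id.pow_const 2).sub measurable_const).sqrt)
  · exact (Measurable.div measurable_const
      (measurable_const.mul ((measurable_id.pow_const 2).sub measurable_const).sqrt)).mul
      (Real.measurable_sin.comp
        (measurable_const.mul ((measurable_id.pow_const 2).sub measurable_const).sqrt))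

theorem Cl_le (c D : ℝ) (hc : 0 < c) (hD : 0 < D)
    (G : MeasureTheory.Measure ℝ) [MeasureTheory.IsFiniteMeasure G]
    (hsupp : G (Set.Icc 0 (c / (2 * D))) = 0)
    (t : ℝ) (ht : 0 ≤ t) (l : ℕ) :
    Cl c D G l t t ≤ ((1 + c ^ 2 * t / (2 * D)) ^ 2 * Real.exp (-(c ^ 2 * t) / D)) *
      Cl c D G l 0 0 := by
  set a := c / (2 * D) with ha_def
  have ha : 0 < a := by positivity
  set ρ := G.restrict (Set.Ici (0:ℝ)) with hρ
  have hae : ∀ᵐ μ ∂ρ, a < μ := by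
    rw [ae_iff]
    have hset : {μ : ℝ | ¬ a < μ} = Set.Iic a := by ext μ; simp
    rw [hρ, hset, Measure.restrict_apply measurableSet_Iic]
    rw [Set.Iic_inter_Ici]
    exact hsupp
  obtain ⟨C, hC0, hC⟩ := besselJ_bounded ha l
  set K := (1 + c ^ 2 * t / (2 * D)) ^ 2 * Real.exp (-(c ^ 2 * t) / D) with hK
  set Et := (1 + c^2*t/(2*D)) * Real.exp (-(c^2*t)/(2*D)) with hEt
  have hEtK : Et^2 = K := by
    rw [hEt, hK, mul_pow, sq (Real.exp _), ← Real.exp_add]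
    congr 1
    field_simp
    ring
  have hEt0 : 0 ≤ Et := by positivity
  set g : ℝ → ℝ → ℝ := fun s μ => besselInt l μ * Htilde2 c D μ s * Htilde2 c D μ s with hg
  have hmeas : ∀ s, Measurable (g s) := fun s =>
    ((measurable_besselInt l).mul (measurable_Htilde2 c D s)).mul (measurable_Htilde2 c D s)
  have hcongr : ∀ s, (fun μ => besselInt l μ * Htilde c D μ s * Htilde c D μ s) =ᵐ[ρ] g s := by
    intro s
    filter_upwards [hae] with μ hμ
    have h1 : Htilde c D μ s = Htilde2 c D μ s := by
      rw [Htilde, if_neg (by rw [← ha_def]; linarith), if_neg (by rw [← ha_def]; linarith)]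
    rw [hg, h1]
  have hbIpos : ∀ μ, a < μ → 0 ≤ besselInt l μ ∧ besselInt l μ ≤ C^2 / a := by
    intro μ hμ
    have hμ0 : 0 < μ := lt_trans ha hμ
    rw [besselInt, if_neg (ne_of_gt hμ0)]
    constructor
    · positivity
    · have h1 : besselJ ((l:ℝ)+1/2) μ ^ 2 ≤ C^2 := by
        have := hC μ (le_of_lt hμ)
        nlinarith [abs_nonneg (besselJ ((l:ℝ)+1/2) μ), sq_abs (besselJ ((l:ℝ)+1/2) μ)]
      exact div_le_div₀ (by positivity) h1 ha (le_of_lt hμ)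
  have hint : ∀ s, 0 ≤ s → Integrable (g s) ρ := by
    intro s hs
    set Es := (1 + c^2*s/(2*D)) * Real.exp (-(c^2*s)/(2*D)) with hEs
    have hEs0 : 0 ≤ Es := by positivity
    refine ⟨(hmeas s).aestronglyMeasurable, HasFiniteIntegral.of_bounded
      (C := (C^2/a) * Es^2) ?_⟩
    filter_upwards [hae] with μ hμ
    obtain ⟨hb0, hb1⟩ := hbIpos μ hμ
    have hH := abs_Htilde2_le hc hD hs hμ
    rw [← hEs] at hH
    have hnorm : ‖g s μ‖ = besselInt l μ * |Htilde2 c D μ s| * |Htilde2 c D μ s| := by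
      rw [hg, Real.norm_eq_abs, abs_mul, abs_mul, abs_of_nonneg hb0]
    rw [hnorm]
    have h2 : besselInt l μ * |Htilde2 c D μ s| * |Htilde2 c D μ s| ≤ (C^2/a) * (Es * Es) := by
      have hab := abs_nonneg (Htilde2 c D μ s)
      have hmm : |Htilde2 c D μ s| * |Htilde2 c D μ s| ≤ Es * Es := mul_le_mul hH hH hab hEs0
      calc besselInt l μ * |Htilde2 c D μ s| * |Htilde2 c D μ s|
          = besselInt l μ * (|Htilde2 c D μ s| * |Htilde2 c D μ s|) := by ring
        _ ≤ (C^2/a) * (Es * Es) :=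
          mul_le_mul hb1 hmm (mul_nonneg hab hab) (by positivity)
    calc besselInt l μ * |Htilde2 c D μ s| * |Htilde2 c D μ s|
        ≤ (C^2/a) * (Es * Es) := h2
      _ = (C^2/a) * Es^2 := by ring
  have hmono : g t ≤ᵐ[ρ] fun μ => K * g 0 μ := by
    filter_upwards [hae] with μ hμ
    obtain ⟨hb0, _⟩ := hbIpos μ hμ
    have hH := abs_Htilde2_le hc hD ht hμ
    rw [← hEt] at hH
    have h1 : Htilde2 c D μ t * Htilde2 c D μ t ≤ K := by
      rw [← hEtK]
      nlinarith [abs_nonneg (Htilde2 c D μ t), sq_abs (Htilde2 c D μ t),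
        neg_abs_le (Htilde2 c D μ t), le_abs_self (Htilde2 c D μ t)]
    have h2 : g t μ ≤ K * besselInt l μ := by
      have he : g t μ = besselInt l μ * (Htilde2 c D μ t * Htilde2 c D μ t) := by rw [hg]; ring
      rw [he]
      calc besselInt l μ * (Htilde2 c D μ t * Htilde2 c D μ t)
          ≤ besselInt l μ * K := mul_le_mul_of_nonneg_left h1 hb0
        _ = K * besselInt l μ := by ring
    have h3 : g 0 μ = besselInt l μ := by
      rw [hg]; simp [Htilde2_zero]
    simpa [h3] using h2
  have hI : ∫ μ, g t μ ∂ρ ≤ K * ∫ μ, g 0 μ ∂ρ := by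
    have h1 := integral_mono_ae (hint t ht) ((hint 0 le_rfl).const_mul K) hmono
    rwa [integral_const_mul] at h1
  have hClt : Cl c D G l t t = 2 * Real.pi^2 * ∫ μ, g t μ ∂ρ := by
    rw [Cl]
    congr 1
    exact integral_congr_ae (hcongr t)
  have hCl0 : Cl c D G l 0 0 = 2 * Real.pi^2 * ∫ μ, g 0 μ ∂ρ := by
    rw [Cl]
    congr 1
    exact integral_congr_ae (hcongr 0)
  rw [hClt, hCl0]
  have hπ : (0:ℝ) ≤ 2 * Real.pi^2 := by positivity
  calc 2 * Real.pi^2 * ∫ μ, g t μ ∂ρ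
      ≤ 2 * Real.pi^2 * (K * ∫ μ, g 0 μ ∂ρ) := mul_le_mul_of_nonneg_left hI hπ
    _ = K * (2 * Real.pi^2 * ∫ μ, g 0 μ ∂ρ) := by ring


/-- If `G([0, c/(2D)]) = 0`, then
`Σ_{l≥L}(2l+1)C_l(t,t) ≤ (1 + c²t/(2D))²·exp(−c²t/D)·Σ_{l≥L}(2l+1)C_l`
for all `t ≥ 0` and all `L` (stated in `ℝ≥0∞`). -/
theorem truncation_tail_decay_high_freq
    (c D : ℝ) (hc : 0 < c) (hD : 0 < D)
    (G : MeasureTheory.Measure ℝ) [MeasureTheory.IsFiniteMeasure G]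
    (hG0 : G (Set.Iio 0) = 0) (hsupp : G (Set.Icc 0 (c / (2 * D))) = 0) :
    ∀ t : ℝ, 0 ≤ t → ∀ L : ℕ,
      ∑' l : ℕ, ENNReal.ofReal ((2 * ((L + l : ℕ) : ℝ) + 1) * Cl c D G (L + l) t t)
        ≤ ENNReal.ofReal ((1 + c ^ 2 * t / (2 * D)) ^ 2 * Real.exp (-(c ^ 2 * t) / D)) *
          ∑' l : ℕ, ENNReal.ofReal ((2 * ((L + l : ℕ) : ℝ) + 1) * Cl c D G (L + l) 0 0) := by
  intro t ht L
  set K := (1 + c ^ 2 * t / (2 * D)) ^ 2 * Real.exp (-(c ^ 2 * t) / D) with hK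
  have hK0 : 0 ≤ K := by positivity
  have key : ∀ l : ℕ,
      ENNReal.ofReal ((2 * ((L + l : ℕ) : ℝ) + 1) * Cl c D G (L + l) t t)
        ≤ ENNReal.ofReal K * ENNReal.ofReal ((2 * ((L + l : ℕ) : ℝ) + 1) * Cl c D G (L + l) 0 0) := by
    intro l
    have h := Cl_le c D hc hD G hsupp t ht (L + l)
    have hpos : (0:ℝ) ≤ 2 * ((L + l : ℕ) : ℝ) + 1 := by positivity
    have h2 : (2 * ((L + l : ℕ) : ℝ) + 1) * Cl c D G (L + l) t t
        ≤ K * ((2 * ((L + l : ℕ) : ℝ) + 1) * Cl c D G (L + l) 0 0) := by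
      calc (2 * ((L + l : ℕ) : ℝ) + 1) * Cl c D G (L + l) t t
          ≤ (2 * ((L + l : ℕ) : ℝ) + 1) * (K * Cl c D G (L + l) 0 0) :=
            mul_le_mul_of_nonneg_left h hpos
        _ = K * ((2 * ((L + l : ℕ) : ℝ) + 1) * Cl c D G (L + l) 0 0) := by ring
    calc ENNReal.ofReal ((2 * ((L + l : ℕ) : ℝ) + 1) * Cl c D G (L + l) t t)
        ≤ ENNReal.ofReal (K * ((2 * ((L + l : ℕ) : ℝ) + 1) * Cl c D G (L + l) 0 0)) :=
          ENNReal.ofReal_le_ofReal h2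
      _ = ENNReal.ofReal K * ENNReal.ofReal ((2 * ((L + l : ℕ) : ℝ) + 1) * Cl c D G (L + l) 0 0) :=
          ENNReal.ofReal_mul hK0
  calc ∑' l : ℕ, ENNReal.ofReal ((2 * ((L + l : ℕ) : ℝ) + 1) * Cl c D G (L + l) t t)
      ≤ ∑' l : ℕ, ENNReal.ofReal K *
          ENNReal.ofReal ((2 * ((L + l : ℕ) : ℝ) + 1) * Cl c D G (L + l) 0 0) :=
        ENNReal.tsum_le_tsum key
    _ = ENNReal.ofReal K *
          ∑' l : ℕ, ENNReal.ofReal ((2 * ((L + l : ℕ) : ℝ) + 1) * Cl c D G (L + l) 0 0) :=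
        ENNReal.tsum_mul_left
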